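/- For every integer n ≥ 1, the number of Catalan words of length n avoiding the vincular pattern 22-1 equals L_n, the number of Motzkin left-factors with n−1 steps. -/

import Mathlib

/-- A Catalan word: a word of positive integers starting with 1 in which each
letter exceeds its predecessor by at most 1. -/
def IsCatalanWord {n : ℕ} (w : Fin n → ℕ) : Prop :=
  (∀ i, 1 ≤ w i) ∧ (∀ h : 0 < n, w ⟨0, h⟩ = 1) ∧
  ∀ i : ℕ, ∀ h : i + 1 < n, w ⟨i + 1, h⟩ ≤ w ⟨i, by omega⟩ + 1

/-- `w` contains the vincular pattern 22-1: there are indices `i` and `k` with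
`i + 1 < k`, `w i = w (i+1)` and `w k < w i`. -/
def Contains22_1 {n : ℕ} (w : Fin n → ℕ) : Prop :=
  ∃ i k : ℕ, ∃ hk : k < n, ∃ hik : i + 1 < k,
    w ⟨i, by omega⟩ = w ⟨i + 1, by omega⟩ ∧ w ⟨k, hk⟩ < w ⟨i, by omega⟩

/-- `L n`: the number of Motzkin left-factors with `n - 1` steps, i.e. sequences
of `n - 1` steps in `{-1, 0, 1}` with all partial sums nonnegative (A005773). -/
noncomputable def motzkinLeftFactors (n : ℕ) : ℕ :=
  Set.ncard {s : Fin (n - 1) → ℤ | (∀ i, s i = -1 ∨ s i = 0 ∨ s i = 1) ∧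
    ∀ j, 0 ≤ ∑ i ∈ Finset.Iic j, s i}

set_option maxHeartbeats 1000000

namespace Cat22

/-! ### Arithmetic counting functions -/

/-- counting 22-1-avoiding Catalan suffix words, reduced parameter `d` -/
def Fa : ℕ → ℕ → ℕ
  | 0, _ => 1
  | m+1, d => Fa m 0 + Fa m (d+1) + ∑ e ∈ Finset.range d, Fa m e

/-- counting Motzkin left factors of length `m` starting at height `h` -/
def Pa : ℕ → ℕ → ℕ
  | 0, _ => 1
  | m+1, h => Pa m (h+1) + Pa m h + (if h = 0 then 0 else Pa m (h-1))

/-- counting suffix words, full state: previous letter `u`, flat floor `φ` -/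
def Fnat : ℕ → ℕ → ℕ → ℕ
  | 0, _, _ => 1
  | m+1, u, φ => ∑ v ∈ Finset.Icc (max φ 1) (u+1), Fnat m v (if v = u then u else φ)

/-- ballot-like coefficients -/
def al (d h : ℕ) : ℤ := (d.choose h : ℤ) - (d.choose (h+1) : ℤ)

theorem al_eq_zero {d h : ℕ} (hdh : d < h) : al d h = 0 := by
  unfold al
  rw [Nat.choose_eq_zero_of_lt hdh, Nat.choose_eq_zero_of_lt (by omega)]
  simp

theorem hockey (h : ℕ) : ∀ d, ∑ e ∈ Finset.range d, ((e.choose h : ℤ)) = (d.choose (h+1) : ℤ) := by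
  intro d
  induction d with
  | zero => simp
  | succ d ih =>
    rw [Finset.sum_range_succ, ih]
    have := Nat.choose_succ_succ d h
    push_cast [this]
    ring

theorem sum_al (d h : ℕ) :
    ∑ e ∈ Finset.range d, al e h = (d.choose (h+1) : ℤ) - (d.choose (h+2) : ℤ) := by
  unfold al
  rw [Finset.sum_sub_distrib, hockey, hockey]

/-- the key identity: `Fa` expressed in terms of `Pa` via ballot coefficients -/
theorem key : ∀ m d, (Fa m d : ℤ) = ∑ h ∈ Finset.range (d+1), al d h * (Pa m h : ℤ) := by
  intro m
  induction m with
  | zero =>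
    intro d
    show (1 : ℤ) = ∑ h ∈ Finset.range (d+1), al d h * ((1 : ℕ) : ℤ)
    have : ∑ h ∈ Finset.range (d+1), al d h * ((1:ℕ) : ℤ)
        = ∑ h ∈ Finset.range (d+1), ((d.choose h : ℤ) - (d.choose (h+1) : ℤ)) := by
      refine Finset.sum_congr rfl fun h _ => ?_
      simp [al]
    rw [this, Finset.sum_range_sub' (fun h => (d.choose h : ℤ))]
    rw [Nat.choose_zero_right, Nat.choose_eq_zero_of_lt (by omega)]
    simp
  | succ m ih =>
    intro d
    have hL : (Fa (m+1) d : ℤ)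
        = (Fa m 0 : ℤ) + (Fa m (d+1) : ℤ) + ∑ e ∈ Finset.range d, (Fa m e : ℤ) := by
      show ((Fa m 0 + Fa m (d+1) + ∑ e ∈ Finset.range d, Fa m e : ℕ) : ℤ) = _
      push_cast
      ring
    have hT1 : (Fa m 0 : ℤ) = ∑ h ∈ Finset.range (d+3), (if h = 0 then 1 else 0) * (Pa m h : ℤ) := by
      have e1 : ∀ h ∈ Finset.range (d+3),
          (if h = 0 then (1:ℤ) else 0) * (Pa m h : ℤ) = if h = 0 then (Pa m h : ℤ) else 0 := by
        intro h _
        split_ifs <;> ring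
      rw [Finset.sum_congr rfl e1,
        Finset.sum_ite_eq' (Finset.range (d+3)) 0 (fun h => (Pa m h : ℤ)),
        if_pos (Finset.mem_range.mpr (by omega))]
      rw [ih 0, Finset.sum_range_one]
      simp [al]
    have hT2 : (Fa m (d+1) : ℤ) = ∑ h ∈ Finset.range (d+3), al (d+1) h * (Pa m h : ℤ) := by
      rw [ih (d+1)]
      refine Finset.sum_subset ?_ ?_
      · intro x hx
        rw [Finset.mem_range] at hx ⊢
        omega
      · intro x _ hnx
        rw [Finset.mem_range, not_lt] at hnx
        rw [al_eq_zero (by omega), zero_mul]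
    have hT3 : (∑ e ∈ Finset.range d, (Fa m e : ℤ))
        = ∑ h ∈ Finset.range (d+3), ((d.choose (h+1) : ℤ) - (d.choose (h+2) : ℤ)) * (Pa m h : ℤ) := by
      have inner : ∀ e ∈ Finset.range d,
          (Fa m e : ℤ) = ∑ h ∈ Finset.range (d+3), al e h * (Pa m h : ℤ) := by
        intro e he
        rw [Finset.mem_range] at he
        rw [ih e]
        refine Finset.sum_subset ?_ ?_
        · intro x hx
          rw [Finset.mem_range] at hx ⊢
          omega
        · intro x _ hnx
          rw [Finset.mem_range, not_lt] at hnx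
          rw [al_eq_zero (by omega), zero_mul]
      rw [Finset.sum_congr rfl inner, Finset.sum_comm]
      refine Finset.sum_congr rfl fun h _ => ?_
      rw [← Finset.sum_mul, sum_al]
    have hPa : ∀ h, (Pa (m+1) h : ℤ)
        = (Pa m (h+1) : ℤ) + (Pa m h : ℤ) + (if h = 0 then 0 else (Pa m (h-1) : ℤ)) := by
      intro h
      show ((Pa m (h+1) + Pa m h + (if h = 0 then 0 else Pa m (h-1)) : ℕ) : ℤ) = _
      cases h with
      | zero => simp
      | succ h' =>
        rw [if_neg (by omega), if_neg (by omega)]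
        push_cast
        ring
    have hR : ∑ h ∈ Finset.range (d+1), al d h * (Pa (m+1) h : ℤ)
        = (∑ h ∈ Finset.range (d+1), al d h * (Pa m (h+1) : ℤ))
          + (∑ h ∈ Finset.range (d+1), al d h * (Pa m h : ℤ))
          + (∑ h ∈ Finset.range (d+1), al d h * (if h = 0 then 0 else (Pa m (h-1) : ℤ))) := by
      rw [← Finset.sum_add_distrib, ← Finset.sum_add_distrib]
      refine Finset.sum_congr rfl fun h _ => ?_
      rw [hPa h]
      ring
    have hS1 : (∑ h ∈ Finset.range (d+1), al d h * (Pa m (h+1) : ℤ))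
        = ∑ h ∈ Finset.range (d+3), (if h = 0 then 0 else al d (h-1)) * (Pa m h : ℤ) := by
      rw [Finset.sum_range_succ'
        (fun h => (if h = 0 then 0 else al d (h-1)) * (Pa m h : ℤ)) (d+2)]
      rw [if_pos rfl, zero_mul, add_zero]
      have e1 : ∀ k ∈ Finset.range (d+2),
          (if k + 1 = 0 then 0 else al d (k+1-1)) * (Pa m (k+1) : ℤ)
            = al d k * (Pa m (k+1) : ℤ) := by
        intro k _
        rw [if_neg (by omega), Nat.add_sub_cancel]
      rw [Finset.sum_congr rfl e1]
      refine Finset.sum_subset ?_ ?_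
      · intro x hx
        rw [Finset.mem_range] at hx ⊢
        omega
      · intro x _ hnx
        rw [Finset.mem_range, not_lt] at hnx
        rw [al_eq_zero (by omega), zero_mul]
    have hS2 : (∑ h ∈ Finset.range (d+1), al d h * (Pa m h : ℤ))
        = ∑ h ∈ Finset.range (d+3), al d h * (Pa m h : ℤ) := by
      refine Finset.sum_subset ?_ ?_
      · intro x hx
        rw [Finset.mem_range] at hx ⊢
        omega
      · intro x _ hnx
        rw [Finset.mem_range, not_lt] at hnx
        rw [al_eq_zero (by omega), zero_mul]
    have hS3 : (∑ h ∈ Finset.range (d+1), al d h * (if h = 0 then 0 else (Pa m (h-1) : ℤ)))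
        = ∑ h ∈ Finset.range (d+3), al d (h+1) * (Pa m h : ℤ) := by
      rw [Finset.sum_range_succ'
        (fun h => al d h * (if h = 0 then 0 else (Pa m (h-1) : ℤ))) d]
      rw [if_pos rfl, mul_zero, add_zero]
      have e1 : ∀ k ∈ Finset.range d,
          al d (k+1) * (if k + 1 = 0 then 0 else (Pa m (k+1-1) : ℤ))
            = al d (k+1) * (Pa m k : ℤ) := by
        intro k _
        rw [if_neg (by omega), Nat.add_sub_cancel]
      rw [Finset.sum_congr rfl e1]
      refine Finset.sum_subset ?_ ?_
      · intro x hx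
        rw [Finset.mem_range] at hx ⊢
        omega
      · intro x _ hnx
        rw [Finset.mem_range, not_lt] at hnx
        rw [al_eq_zero (by omega), zero_mul]
    rw [hL, hT1, hT2, hT3, hR, hS1, hS2, hS3]
    rw [← Finset.sum_add_distrib, ← Finset.sum_add_distrib,
      ← Finset.sum_add_distrib, ← Finset.sum_add_distrib]
    refine Finset.sum_congr rfl fun h _ => ?_
    have goal : (if h = 0 then (1:ℤ) else 0) + al (d+1) h
          + ((d.choose (h+1) : ℤ) - (d.choose (h+2) : ℤ))
        = (if h = 0 then 0 else al d (h-1)) + al d h + al d (h+1) := by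
      cases h with
      | zero =>
        rw [if_pos rfl, if_pos rfl]
        unfold al
        rw [Nat.choose_zero_right, Nat.choose_zero_right, Nat.choose_one_right,
          Nat.choose_one_right]
        push_cast
        ring
      | succ h' =>
        rw [if_neg (by omega), if_neg (by omega)]
        unfold al
        have p1 := Nat.choose_succ_succ d h'
        have p2 := Nat.choose_succ_succ d (h'+1)
        rw [show h'+1-1 = h' from rfl]
        push_cast [p1, p2]
        ring
    linear_combination ((Pa m h : ℤ)) * goal

theorem fa_eq_pa (m : ℕ) : Fa m 0 = Pa m 0 := by
  have h := key m 0
  rw [Finset.sum_range_one] at h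
  have hal : al 0 0 = 1 := by simp [al]
  rw [hal, one_mul] at h
  exact_mod_cast h

theorem fnat_eq_fa : ∀ m u φ, 1 ≤ u → φ ≤ u → Fnat m u φ = Fa m (u - max φ 1) := by
  intro m
  induction m with
  | zero => intro u φ _ _; rfl
  | succ m ih =>
    intro u φ hu hφ
    set a := max φ 1 with ha
    have ha1 : 1 ≤ a := le_max_right _ _
    have hau : a ≤ u := max_le hφ hu
    set d := u - a with hd
    show (∑ v ∈ Finset.Icc a (u+1), Fnat m v (if v = u then u else φ)) = _
    have hsummand : ∀ v ∈ Finset.Icc a (u+1),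
        Fnat m v (if v = u then u else φ) = if v = u then Fa m 0 else Fa m (v - a) := by
      intro v hv
      rw [Finset.mem_Icc] at hv
      by_cases hvu : v = u
      · subst hvu
        rw [if_pos rfl, if_pos rfl, ih v v (by omega) le_rfl]
        congr 1
        omega
      · rw [if_neg hvu, if_neg hvu, ih v φ (by omega) (by omega)]
    rw [Finset.sum_congr rfl hsummand]
    have hIcc : Finset.Icc a (u+1) = Finset.Ico a (u+2) := by
      rw [← Finset.Ico_add_one_right_eq_Icc]; rfl
    rw [hIcc, Finset.sum_Ico_eq_sum_range]
    have hlen : u + 2 - a = d + 2 := by omega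
    rw [hlen]
    have hsummand2 : ∀ i ∈ Finset.range (d+2),
        (if a + i = u then Fa m 0 else Fa m (a + i - a)) =
          (if i = d then Fa m 0 else Fa m i) := by
      intro i _
      have : (a + i = u) ↔ (i = d) := by omega
      by_cases hid : i = d
      · rw [if_pos (this.mpr hid), if_pos hid]
      · rw [if_neg (fun hh => hid (this.mp hh)), if_neg hid]
        congr 1
        omega
    rw [Finset.sum_congr rfl hsummand2]
    have hrest : ∀ i ∈ Finset.range d, (if i = d then Fa m 0 else Fa m i) = Fa m i := by
      intro i hi
      rw [Finset.mem_range] at hi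
      rw [if_neg (by omega)]
    have step1 : (∑ i ∈ Finset.range (d+2), (if i = d then Fa m 0 else Fa m i))
        = Fa m 0 + Fa m (d+1) + ∑ e ∈ Finset.range d, Fa m e := by
      rw [Finset.sum_range_succ, Finset.sum_range_succ]
      rw [if_pos (rfl : d = d), if_neg (by omega : ¬ (d+1 = d))]
      rw [Finset.sum_congr rfl hrest]
      ring
    rw [step1]
    rfl

/-! ### Predicates on words and paths -/

/-- valid suffix of an avoiding Catalan word: previous letter `u`, flat floor `φ` -/
def WordOK (m u φ : ℕ) (w : Fin m → ℕ) : Prop :=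
  (∀ i, 1 ≤ w i ∧ φ ≤ w i) ∧
  (∀ h : 0 < m, w ⟨0, h⟩ ≤ u + 1) ∧
  (∀ i : ℕ, ∀ h : i + 1 < m, w ⟨i+1, h⟩ ≤ w ⟨i, by omega⟩ + 1) ∧
  (∀ h0 : 0 < m, w ⟨0, h0⟩ = u → ∀ k : ℕ, ∀ hk : k < m, 1 ≤ k → u ≤ w ⟨k, hk⟩) ∧
  (∀ i k : ℕ, ∀ hk : k < m, ∀ hik : i + 1 < k,
    w ⟨i, by omega⟩ = w ⟨i+1, by omega⟩ → w ⟨i, by omega⟩ ≤ w ⟨k, hk⟩)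

theorem wordOK_zero (u φ : ℕ) (w : Fin 0 → ℕ) : WordOK 0 u φ w := by
  refine ⟨fun i => i.elim0, ?_, ?_, ?_, ?_⟩ <;> intros <;> omega

theorem wordOK_succ (m u φ : ℕ) (w : Fin (m+1) → ℕ) :
    WordOK (m+1) u φ w ↔
      (w 0 ∈ Finset.Icc (max φ 1) (u+1) ∧
        WordOK m (w 0) (if w 0 = u then u else φ) (Fin.tail w)) := by
  have hz : (0 : Fin (m+1)) = ⟨0, Nat.succ_pos m⟩ := by
    ext; simp
  have ht : ∀ (k : ℕ) (hk : k < m), Fin.tail w ⟨k, hk⟩ = w ⟨k+1, by omega⟩ := by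
    intro k hk; rfl
  constructor
  · rintro ⟨h1, h2, h3, h4, h5⟩
    have hw0 : max φ 1 ≤ w 0 := by
      rw [hz]; exact max_le (h1 _).2 (h1 _).1
    refine ⟨Finset.mem_Icc.mpr ⟨hw0, by rw [hz]; exact h2 _⟩, ?_, ?_, ?_, ?_, ?_⟩
    · rintro ⟨i, hi⟩
      rw [ht i hi]
      refine ⟨(h1 _).1, ?_⟩
      split_ifs with hu
      · rw [hz] at hu
        exact h4 (Nat.succ_pos m) hu (i+1) (by omega) (by omega)
      · exact (h1 _).2
    · intro hm
      rw [ht 0 hm, hz]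
      exact h3 0 (by omega)
    · intro i hi
      rw [ht (i+1) hi, ht i (by omega)]
      exact h3 (i+1) (by omega)
    · intro hm heq k hk hk1
      rw [ht k hk]
      rw [ht 0 hm] at heq
      have hpair : w ⟨0, by omega⟩ = w ⟨0+1, by omega⟩ := by
        rw [← hz]; exact heq.symm
      have h' := h5 0 (k+1) (by omega) (by omega) hpair
      rw [hz]
      exact h'
    · intro i k hk hik heq
      rw [ht k hk]
      rw [ht i (by omega), ht (i+1) (by omega)] at heq
      rw [ht i (by omega)]
      exact h5 (i+1) (k+1) (by omega) (by omega) heq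
  · rintro ⟨hmem, h1, h2, h3, h4, h5⟩
    rw [Finset.mem_Icc] at hmem
    refine ⟨?_, ?_, ?_, ?_, ?_⟩
    · rintro ⟨i, hi⟩
      match i, hi with
      | 0, hi =>
        rw [← hz]
        exact ⟨le_trans (le_max_right _ _) hmem.1, le_trans (le_max_left _ _) hmem.1⟩
      | (j+1), hi =>
        have := h1 ⟨j, by omega⟩
        rw [ht j (by omega)] at this
        refine ⟨this.1, ?_⟩
        by_cases hu : w 0 = u
        · rw [if_pos hu] at this
          have hφu : φ ≤ u := hu ▸ (le_trans (le_max_left φ 1) hmem.1)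
          exact le_trans hφu this.2
        · rw [if_neg hu] at this
          exact this.2
    · intro _
      rw [← hz]; exact hmem.2
    · intro i hi
      match i with
      | 0 =>
        have := h2 (by omega : 0 < m)
        rw [ht 0 (by omega), hz] at this
        exact this
      | (j+1) =>
        have := h3 j (by omega)
        rw [ht (j+1) (by omega), ht j (by omega)] at this
        exact this
    · intro h0 heq k hk hk1
      rw [← hz] at heq
      match k, hk with
      | (j+1), hk =>
        have hφ : (if w 0 = u then u else φ) = u := by simp [heq]
        have := (h1 ⟨j, by omega⟩).2
        rw [ht j (by omega), hφ] at this
        exact this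
    · intro i k hk hik heq
      match i with
      | 0 =>
        match k, hk with
        | (j+1), hk =>
          rw [← hz] at heq ⊢
          have heq' : Fin.tail w ⟨0, by omega⟩ = w 0 := by
            rw [ht 0 (by omega)]; exact heq.symm
          have := h4 (by omega : 0 < m) heq' j (by omega) (by omega)
          rw [ht j (by omega)] at this
          exact this
      | (i'+1) =>
        match k, hk with
        | (j+1), hk =>
          have heq2 : Fin.tail w ⟨i', by omega⟩ = Fin.tail w ⟨i'+1, by omega⟩ := by
            rw [ht i' (by omega), ht (i'+1) (by omega)]; exact heq
          have := h5 i' (j) (by omega) (by omega) heq2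
          rw [ht i' (by omega), ht j (by omega)] at this
          exact this

theorem bridge (m : ℕ) (w : Fin (m+1) → ℕ) :
    (IsCatalanWord w ∧ ¬ Contains22_1 w) ↔ (w 0 = 1 ∧ WordOK m 1 0 (Fin.tail w)) := by
  have hz : (0 : Fin (m+1)) = ⟨0, Nat.succ_pos m⟩ := by ext; simp
  have ht : ∀ (k : ℕ) (hk : k < m), Fin.tail w ⟨k, hk⟩ = w ⟨k+1, by omega⟩ := by
    intro k hk; rfl
  constructor
  · rintro ⟨⟨c1, c2, c3⟩, hnc⟩
    have hw0 : w 0 = 1 := by rw [hz]; exact c2 _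
    refine ⟨hw0, ?_, ?_, ?_, ?_, ?_⟩
    · rintro ⟨i, hi⟩
      exact ⟨c1 _, Nat.zero_le _⟩
    · intro hm
      rw [ht 0 hm]
      have := c3 0 (by omega)
      have := c2 (Nat.succ_pos m)
      omega
    · intro i hi
      rw [ht (i+1) hi, ht i (by omega)]
      exact c3 (i+1) (by omega)
    · intro h0 heq k hk hk1
      rw [ht k hk]
      exact c1 _
    · intro i k hk hik heq
      by_contra hlt
      rw [ht i (by omega), ht k hk] at hlt
      rw [ht i (by omega), ht (i+1) (by omega)] at heq
      exact hnc ⟨i+1, k+1, by omega, by omega, heq, by omega⟩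
  · rintro ⟨hw0, h1, h2, h3, h4, h5⟩
    have hone : ∀ (k : ℕ) (hk : k < m+1), 1 ≤ w ⟨k, hk⟩ := by
      intro k hk
      match k, hk with
      | 0, hk => rw [← hz, hw0]
      | (j+1), hk =>
        have := (h1 ⟨j, by omega⟩).1
        rw [ht j (by omega)] at this
        exact this
    refine ⟨⟨fun i => by simpa using hone i.1 i.2, fun h => by rw [← hz]; exact hw0, ?_⟩, ?_⟩
    · intro i hi
      match i with
      | 0 =>
        have := h2 (by omega : 0 < m)
        rw [ht 0 (by omega)] at this
        rw [← hz]
        omega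
      | (j+1) =>
        have := h3 j (by omega)
        rw [ht (j+1) (by omega), ht j (by omega)] at this
        exact this
    · rintro ⟨i, k, hk, hik, heq, hlt⟩
      match i with
      | 0 =>
        have h01 : w ⟨0, by omega⟩ = 1 := by rw [← hz]; exact hw0
        have := hone k hk
        omega
      | (i'+1) =>
        match k, hk with
        | (j+1), hk =>
          have heq2 : Fin.tail w ⟨i', by omega⟩ = Fin.tail w ⟨i'+1, by omega⟩ := by
            rw [ht i' (by omega), ht (i'+1) (by omega)]; exact heq
          have := h5 i' j (by omega) (by omega) heq2
          rw [ht i' (by omega), ht j (by omega)] at this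
          omega

/-- Motzkin left factor from height `h` -/
def PathOK (m h : ℕ) (s : Fin m → ℤ) : Prop :=
  (∀ i, s i = -1 ∨ s i = 0 ∨ s i = 1) ∧ ∀ j, -(h : ℤ) ≤ ∑ i ∈ Finset.Iic j, s i

theorem pathOK_zero (h : ℕ) (s : Fin 0 → ℤ) : PathOK 0 h s :=
  ⟨fun i => i.elim0, fun j => j.elim0⟩

theorem Iic_succ_eq {m : ℕ} (j : Fin m) :
    (Finset.Iic j.succ : Finset (Fin (m+1))) = insert 0 ((Finset.Iic j).map (Fin.succEmb m)) := by
  ext x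
  simp only [Finset.mem_Iic, Finset.mem_insert, Finset.mem_map]
  constructor
  · intro hx
    rcases Fin.eq_zero_or_eq_succ x with h0 | ⟨y, hy⟩
    · exact Or.inl h0
    · refine Or.inr ⟨y, ?_, hy.symm⟩
      rw [hy] at hx
      exact Fin.succ_le_succ_iff.mp hx
  · rintro (h0 | ⟨y, hy, hyx⟩)
    · rw [h0]; exact Fin.zero_le _
    · rw [← hyx]
      exact Fin.succ_le_succ_iff.mpr hy

theorem sum_Iic_succ {m : ℕ} (s : Fin (m+1) → ℤ) (j : Fin m) :
    ∑ i ∈ Finset.Iic j.succ, s i = s 0 + ∑ i ∈ Finset.Iic j, (Fin.tail s) i := by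
  rw [Iic_succ_eq, Finset.sum_insert, Finset.sum_map]
  · rfl
  · simp only [Finset.mem_map, not_exists, not_and]
    intro y _
    exact Fin.succ_ne_zero y

theorem sum_Iic_zero {m : ℕ} (s : Fin (m+1) → ℤ) :
    ∑ i ∈ Finset.Iic (0 : Fin (m+1)), s i = s 0 := by
  have : (Finset.Iic (0 : Fin (m+1))) = {0} := by
    ext x
    simp [Finset.mem_Iic, Fin.le_zero_iff]
  rw [this, Finset.sum_singleton]

def stepSet (h : ℕ) : Finset ℤ := if h = 0 then {0, 1} else {-1, 0, 1}

theorem stepSet_def (h : ℕ) : stepSet h = if h = 0 then ({0, 1} : Finset ℤ) else {-1, 0, 1} := rfl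

theorem pathOK_succ (m h : ℕ) (s : Fin (m+1) → ℤ) :
    PathOK (m+1) h s ↔
      (s 0 ∈ stepSet h ∧ PathOK m ((h : ℤ) + s 0).toNat (Fin.tail s)) := by
  constructor
  · rintro ⟨h1, h2⟩
    have hs0 : -(h : ℤ) ≤ s 0 := by
      have := h2 0
      rwa [sum_Iic_zero] at this
    have hmem : s 0 ∈ stepSet h := by
      rcases h1 0 with h' | h' | h' <;> · unfold stepSet; split_ifs <;> simp [h'] <;> omega
    refine ⟨hmem, fun i => h1 i.succ, fun j => ?_⟩
    have := h2 j.succ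
    rw [sum_Iic_succ] at this
    have hnn : 0 ≤ (h : ℤ) + s 0 := by omega
    rw [Int.toNat_of_nonneg hnn]
    omega
  · rintro ⟨hmem, h1, h2⟩
    have hs01 : s 0 = -1 ∨ s 0 = 0 ∨ s 0 = 1 := by
      unfold stepSet at hmem; split_ifs at hmem <;> simp at hmem <;> tauto
    have hs0 : -(h : ℤ) ≤ s 0 := by
      unfold stepSet at hmem
      split_ifs at hmem with h0
      · simp at hmem; omega
      · have : (1:ℤ) ≤ (h:ℤ) := by
          have : h ≠ 0 := h0
          omega
        omega
    have hnn : 0 ≤ (h : ℤ) + s 0 := by omega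
    refine ⟨fun i => ?_, fun j => ?_⟩
    · rcases Fin.eq_zero_or_eq_succ i with h0 | ⟨y, hy⟩
      · rw [h0]; exact hs01
      · rw [hy]; exact h1 y
    · rcases Fin.eq_zero_or_eq_succ j with h0 | ⟨y, hy⟩
      · rw [h0, sum_Iic_zero]; exact hs0
      · rw [hy, sum_Iic_succ]
        have := h2 y
        rw [Int.toNat_of_nonneg hnn] at this
        omega

/-! ### Generic counting lemmas -/

theorem card_step {α : Type*} {m : ℕ} (P : (Fin (m+1) → α) → Prop) (A : Finset α)
    (Q : α → (Fin m → α) → Prop)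
    (hP : ∀ w, P w ↔ (w 0 ∈ A ∧ Q (w 0) (Fin.tail w)))
    (hfin : ∀ a, Finite {t : Fin m → α // Q a t}) :
    Finite {w : Fin (m+1) → α // P w} ∧
      Nat.card {w : Fin (m+1) → α // P w} = ∑ a ∈ A, Nat.card {t : Fin m → α // Q a t} := by
  classical
  have e : {w : Fin (m+1) → α // P w} ≃ (Σ a : A, {t : Fin m → α // Q a.1 t}) :=
    { toFun := fun w => ⟨⟨w.1 0, ((hP w.1).mp w.2).1⟩, ⟨Fin.tail w.1, ((hP w.1).mp w.2).2⟩⟩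
      invFun := fun p => ⟨Fin.cons p.1.1 p.2.1, by
        rw [hP]
        constructor
        · simpa using p.1.2
        · simpa [Fin.tail_cons] using p.2.2⟩
      left_inv := fun w => by
        ext i
        simp [Fin.cons_self_tail]
      right_inv := fun p => by
        refine Sigma.ext ?_ ?_
        · simp
        · simp [Fin.tail_cons]; rfl }
  haveI : ∀ a : A, Finite {t : Fin m → α // Q a.1 t} := fun a => hfin a.1
  haveI : Finite (Σ a : A, {t : Fin m → α // Q a.1 t}) := inferInstance
  haveI hf : Finite {w : Fin (m+1) → α // P w} := Finite.of_equiv _ e.symm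
  refine ⟨hf, ?_⟩
  haveI : ∀ a : A, Fintype {t : Fin m → α // Q a.1 t} := fun a => Fintype.ofFinite _
  rw [Nat.card_congr e, Nat.card_eq_fintype_card, Fintype.card_sigma]
  rw [← Finset.sum_coe_sort A (fun a => Nat.card {t : Fin m → α // Q a t})]
  exact Finset.sum_congr rfl fun a _ => (Nat.card_eq_fintype_card).symm

theorem card_zero {α : Type*} (P : (Fin 0 → α) → Prop) (hP : ∀ w, P w) :
    Nat.card {w : Fin 0 → α // P w} = 1 := by
  haveI : Unique {w : Fin 0 → α // P w} :=
    { default := ⟨fun i => i.elim0, hP _⟩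
      uniq := fun w => by
        ext i
        exact i.elim0 }
  simp

theorem finite_zero {α : Type*} (P : (Fin 0 → α) → Prop) :
    Finite {w : Fin 0 → α // P w} := by
  haveI : Subsingleton (Fin 0 → α) := ⟨fun a b => funext fun i => i.elim0⟩
  haveI : Finite (Fin 0 → α) := Finite.of_subsingleton
  exact Subtype.finite

theorem card_pathOK : ∀ m h, Finite {s : Fin m → ℤ // PathOK m h s} ∧
    Nat.card {s : Fin m → ℤ // PathOK m h s} = Pa m h := by
  intro m
  induction m with
  | zero =>
    intro h
    exact ⟨finite_zero _, card_zero _ (pathOK_zero h)⟩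
  | succ m ih =>
    intro h
    have key := card_step (PathOK (m+1) h) (stepSet h)
      (fun c t => PathOK m ((h : ℤ) + c).toNat t)
      (pathOK_succ m h) (fun c => (ih _).1)
    refine ⟨key.1, ?_⟩
    rw [key.2]
    have hterm : ∀ c ∈ stepSet h,
        Nat.card {t : Fin m → ℤ // PathOK m ((h : ℤ) + c).toNat t}
          = Pa m ((h : ℤ) + c).toNat :=
      fun c _ => (ih _).2
    rw [Finset.sum_congr rfl hterm, stepSet_def]
    rcases Nat.eq_zero_or_pos h with h0 | hpos
    · subst h0
      rw [if_pos rfl]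
      rw [show ({0, 1} : Finset ℤ) = insert 0 {1} from rfl, Finset.sum_insert (by norm_num),
        Finset.sum_singleton]
      have e0 : ((0 : ℕ) : ℤ) + 0 = ((0 : ℕ) : ℤ) := by norm_num
      have e1 : ((0 : ℕ) : ℤ) + 1 = ((1 : ℕ) : ℤ) := by norm_num
      rw [e0, e1, Int.toNat_natCast, Int.toNat_natCast]
      show Pa m 0 + Pa m 1 = Pa (m+1) 0
      show Pa m 0 + Pa m 1 = Pa m 1 + Pa m 0 + (if 0 = 0 then 0 else Pa m (0-1))
      simp [Nat.add_comm]
    · obtain ⟨k, rfl⟩ : ∃ k, h = k + 1 := ⟨h - 1, by omega⟩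
      rw [if_neg (by omega)]
      rw [show ({-1, 0, 1} : Finset ℤ) = insert (-1) (insert 0 {1}) from rfl,
        Finset.sum_insert (by norm_num), Finset.sum_insert (by norm_num), Finset.sum_singleton]
      have em : ((k+1 : ℕ) : ℤ) + (-1) = ((k : ℕ) : ℤ) := by push_cast; ring
      have e0 : ((k+1 : ℕ) : ℤ) + 0 = ((k+1 : ℕ) : ℤ) := by push_cast; ring
      have e1 : ((k+1 : ℕ) : ℤ) + 1 = ((k+2 : ℕ) : ℤ) := by push_cast; ring
      rw [em, e0, e1, Int.toNat_natCast, Int.toNat_natCast, Int.toNat_natCast]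
      show Pa m k + (Pa m (k+1) + Pa m (k+2))
        = Pa m (k+2) + Pa m (k+1) + (if k+1 = 0 then 0 else Pa m (k+1-1))
      rw [if_neg (by omega)]
      simp only [Nat.add_sub_cancel]
      omega

theorem card_wordOK : ∀ m u φ, Finite {w : Fin m → ℕ // WordOK m u φ w} ∧
    Nat.card {w : Fin m → ℕ // WordOK m u φ w} = Fnat m u φ := by
  intro m
  induction m with
  | zero =>
    intro u φ
    exact ⟨finite_zero _, card_zero _ (wordOK_zero u φ)⟩
  | succ m ih =>
    intro u φ
    have key := card_step (WordOK (m+1) u φ) (Finset.Icc (max φ 1) (u+1))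
      (fun v t => WordOK m v (if v = u then u else φ) t)
      (wordOK_succ m u φ) (fun v => (ih _ _).1)
    refine ⟨key.1, ?_⟩
    rw [key.2]
    show _ = Fnat (m+1) u φ
    show _ = ∑ v ∈ Finset.Icc (max φ 1) (u+1), Fnat m v (if v = u then u else φ)
    exact Finset.sum_congr rfl fun v _ => (ih _ _).2

end Cat22

theorem catalan_avoid_22_1 (n : ℕ) (hn : 1 ≤ n) :
    Set.ncard {w : Fin n → ℕ | IsCatalanWord w ∧ ¬ Contains22_1 w} =
      motzkinLeftFactors n := by
  obtain ⟨m, rfl⟩ : ∃ m, n = m + 1 := ⟨n - 1, by omega⟩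
  -- word side
  have hword : Set.ncard {w : Fin (m+1) → ℕ | IsCatalanWord w ∧ ¬ Contains22_1 w}
      = Cat22.Fnat m 1 0 := by
    rw [← Nat.card_coe_set_eq]
    have e : ↥{w : Fin (m+1) → ℕ | IsCatalanWord w ∧ ¬ Contains22_1 w}
        ≃ {t : Fin m → ℕ // Cat22.WordOK m 1 0 t} :=
      { toFun := fun w => ⟨Fin.tail w.1, ((Cat22.bridge m w.1).mp w.2).2⟩
        invFun := fun t => ⟨Fin.cons 1 t.1, (Cat22.bridge m _).mpr
          ⟨by simp, by rw [Fin.tail_cons]; exact t.2⟩⟩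
        left_inv := fun w => by
          apply Subtype.ext
          have hw0 : w.1 0 = 1 := ((Cat22.bridge m w.1).mp w.2).1
          show Fin.cons 1 (Fin.tail w.1) = w.1
          calc Fin.cons 1 (Fin.tail w.1)
              = Fin.cons (w.1 0) (Fin.tail w.1) := by rw [hw0]
            _ = w.1 := Fin.cons_self_tail w.1
        right_inv := fun t => by
          apply Subtype.ext
          funext i
          simp [Fin.tail_cons] }
    rw [Nat.card_congr e, (Cat22.card_wordOK m 1 0).2]
  -- path side
  have hpath : motzkinLeftFactors (m+1) = Cat22.Pa m 0 := by
    unfold motzkinLeftFactors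
    have hset : {s : Fin (m+1-1) → ℤ | (∀ i, s i = -1 ∨ s i = 0 ∨ s i = 1) ∧
        ∀ j, 0 ≤ ∑ i ∈ Finset.Iic j, s i} = {s : Fin m → ℤ | Cat22.PathOK m 0 s} := by
      ext s
      simp [Cat22.PathOK]
    rw [hset, ← Nat.card_coe_set_eq]
    have : Nat.card ↥{s : Fin m → ℤ | Cat22.PathOK m 0 s}
        = Nat.card {s : Fin m → ℤ // Cat22.PathOK m 0 s} := rfl
    rw [this, (Cat22.card_pathOK m 0).2]
  rw [hword, hpath]
  rw [Cat22.fnat_eq_fa m 1 0 le_rfl (by omega)]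
  have : 1 - max 0 1 = 0 := rfl
  rw [this, Cat22.fa_eq_pa]
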